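/- arXiv:1505.03548 — 3 statements merged into one kernel-verified Lean document; each statement's English description precedes it below -/
import Mathlib

section
/- Let f₁, f₃ be continuous functions with f₃ nonvanishing, let ω = exp(∫(f₁ - f₂²/(3f₃))dx), suppose the Abel invariant I is identically zero, and let ξ = ∫ f₃ω² dx. Then η(ξ) = 1/√(c - 2ξ) solves the normal-form equation dη/dξ = η³, so that y = ω·η(ξ) - f₂/(3f₃) solves dy/dx = f₀ + f₁y + f₂y² + f₃y³. -/
lemma eta_deriv (c u : ℝ) (h : 0 < c - 2 * u) :
    HasDerivAt (fun u => 1 / Real.sqrt (c - 2 * u))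
      ((1 / Real.sqrt (c - 2 * u)) ^ 3) u := by
  have hs : 0 < Real.sqrt (c - 2 * u) := Real.sqrt_pos.2 h
  have h1 : HasDerivAt (fun u : ℝ => c - 2 * u) (-2) u := by
    simpa using ((hasDerivAt_id u).const_mul (2:ℝ)).const_sub c
  have h2 : HasDerivAt (fun u => Real.sqrt (c - 2 * u))
      (-2 / (2 * Real.sqrt (c - 2 * u))) u :=
    (Real.hasDerivAt_sqrt h.ne').comp u h1 |>.congr_deriv (by ring)
  have h3 : HasDerivAt (fun u => (Real.sqrt (c - 2 * u))⁻¹)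
      (-(-2 / (2 * Real.sqrt (c - 2 * u))) / (Real.sqrt (c - 2 * u)) ^ 2) u :=
    h2.inv hs.ne'
  have : HasDerivAt (fun u => 1 / Real.sqrt (c - 2 * u))
      (-(-2 / (2 * Real.sqrt (c - 2 * u))) / (Real.sqrt (c - 2 * u)) ^ 2) u := by
    simpa [one_div] using h3
  refine this.congr_deriv ?_

  have key : Real.sqrt (c - 2 * u) ^ 2 = c - 2 * u := Real.sq_sqrt h.le
  field_simp

theorem abel_null_invariant_solution
    (S : Set ℝ) (hS : IsOpen S) (f0 f1 f2 f3 ω ξ : ℝ → ℝ) (c : ℝ)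
    (hf3 : ∀ x ∈ S, f3 x ≠ 0)
    (hωdiff : ∀ x ∈ S, DifferentiableAt ℝ ω x)
    (hωpos : ∀ x ∈ S, 0 < ω x)
    (hωd : ∀ x ∈ S, deriv ω x = (f1 x - f2 x ^ 2 / (3 * f3 x)) * ω x)
    (hξ : ∀ x ∈ S, HasDerivAt ξ (f3 x * ω x ^ 2) x)
    (hquot : ∀ x ∈ S, DifferentiableAt ℝ (fun x => f2 x / f3 x) x)
    (hI : ∀ x ∈ S, f0 x + (1/3) * deriv (fun x => f2 x / f3 x) x
            - f1 x * f2 x / (3 * f3 x) + 2 * f2 x ^ 3 / (27 * f3 x ^ 2) = 0)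
    (hc : ∀ x ∈ S, 0 < c - 2 * ξ x) :
    (∀ u : ℝ, 0 < c - 2 * u →
      HasDerivAt (fun u => 1 / Real.sqrt (c - 2 * u))
        ((1 / Real.sqrt (c - 2 * u)) ^ 3) u) ∧
    (∀ x ∈ S,
      deriv (fun x => ω x * (1 / Real.sqrt (c - 2 * ξ x)) - f2 x / (3 * f3 x)) x
        = f0 x
          + f1 x * (ω x * (1 / Real.sqrt (c - 2 * ξ x)) - f2 x / (3 * f3 x))
          + f2 x * (ω x * (1 / Real.sqrt (c - 2 * ξ x)) - f2 x / (3 * f3 x)) ^ 2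
          + f3 x * (ω x * (1 / Real.sqrt (c - 2 * ξ x)) - f2 x / (3 * f3 x)) ^ 3) := by
  refine ⟨fun u hu => eta_deriv c u hu, fun x hx => ?_⟩
  have h3 := hf3 x hx
  -- derivative of η ∘ ξ
  have hη : HasDerivAt (fun x => 1 / Real.sqrt (c - 2 * ξ x))
      ((1 / Real.sqrt (c - 2 * ξ x)) ^ 3 * (f3 x * ω x ^ 2)) x :=
    (eta_deriv c (ξ x) (hc x hx)).comp x (hξ x hx)
  -- derivative of ω
  have hω : HasDerivAt ω ((f1 x - f2 x ^ 2 / (3 * f3 x)) * ω x) x := by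
    rw [← hωd x hx]; exact (hωdiff x hx).hasDerivAt
  -- derivative of f2/(3 f3)
  have hq : HasDerivAt (fun x => f2 x / (3 * f3 x))
      (deriv (fun x => f2 x / f3 x) x / 3) x := by
    have he : (fun x => f2 x / (3 * f3 x)) = fun x => f2 x / f3 x / 3 := by
      funext y; rw [div_div]; ring_nf
    rw [he]
    exact ((hquot x hx).hasDerivAt).div_const 3
  have hy : HasDerivAt (fun x => ω x * (1 / Real.sqrt (c - 2 * ξ x)) - f2 x / (3 * f3 x))
      ((f1 x - f2 x ^ 2 / (3 * f3 x)) * ω x * (1 / Real.sqrt (c - 2 * ξ x))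
        + ω x * ((1 / Real.sqrt (c - 2 * ξ x)) ^ 3 * (f3 x * ω x ^ 2))
        - deriv (fun x => f2 x / f3 x) x / 3) x := (hω.mul hη).sub hq
  rw [hy.deriv]
  have hIx := hI x hx
  set E := 1 / Real.sqrt (c - 2 * ξ x)
  set D := deriv (fun x => f2 x / f3 x) x
  have hD : D = -3 * (f0 x - f1 x * f2 x / (3 * f3 x) + 2 * f2 x ^ 3 / (27 * f3 x ^ 2)) := by
    linarith
  rw [hD]
  field_simp
  ring
end

section
/- Suppose Q(x) = k·P(x) for a constant k and P is continuous with antiderivative R. If ν : I → ℝ is differentiable and satisfies ν·ν' + P + Qν = 0, then the function Ψ(x) = (1 + k·ν(x))·e^{-k(ν(x) + k·R(x))} is constant on I. -/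
theorem abel_integrating_factor_first_integral
    (S : Set ℝ) (hS : IsOpen S) (hconn : IsPreconnected S)
    (P Q R ν : ℝ → ℝ) (k : ℝ)
    (hR : ∀ x ∈ S, HasDerivAt R (P x) x)
    (hQ : ∀ x ∈ S, Q x = k * P x)
    (hν : ∀ x ∈ S, DifferentiableAt ℝ ν x)
    (hode : ∀ x ∈ S, ν x * deriv ν x + P x + Q x * ν x = 0) :
    ∃ C : ℝ, ∀ x ∈ S,
      (1 + k * ν x) * Real.exp (-k * (ν x + k * R x)) = C := by
  rcases S.eq_empty_or_nonempty with rfl | ⟨x₀, hx₀⟩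
  · exact ⟨0, fun x hx => absurd hx (Set.notMem_empty x)⟩
  set f : ℝ → ℝ := fun x => (1 + k * ν x) * Real.exp (-k * (ν x + k * R x)) with hf
  have hderiv : ∀ x ∈ S, HasDerivAt f 0 x := by
    intro x hx
    have hdν : HasDerivAt ν (deriv ν x) x := (hν x hx).hasDerivAt
    have h1 : HasDerivAt (fun y => 1 + k * ν y) (k * deriv ν x) x :=
      (hdν.const_mul k).const_add 1
    have hA : HasDerivAt (fun y => -k * (ν y + k * R y))
        (-k * (deriv ν x + k * P x)) x :=
      (hdν.add ((hR x hx).const_mul k)).const_mul (-k)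
    have h2 := hA.exp
    have hm := h1.mul h2
    have hode' := hode x hx
    rw [hQ x hx] at hode'
    refine hm.congr_deriv ?_
    linear_combination (-(k ^ 2 * Real.exp (-k * (ν x + k * R x)))) * hode'
  -- f is constant on every ball contained in S
  have hlocal : ∀ x ∈ S, ∃ ε > 0, Metric.ball x ε ⊆ S ∧
      ∀ y ∈ Metric.ball x ε, f y = f x := by
    intro x hx
    obtain ⟨ε, hε, hball⟩ := Metric.isOpen_iff.1 hS x hx
    refine ⟨ε, hε, hball, fun y hy => ?_⟩
    refine (convex_ball x ε).is_const_of_fderivWithin_eq_zero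
      (fun z hz => ((hderiv z (hball hz)).differentiableAt).differentiableWithinAt)
      (fun z hz => ?_) hy (Metric.mem_ball_self hε)
    rw [fderivWithin_of_isOpen Metric.isOpen_ball hz]
    have := (hderiv z (hball hz)).hasFDerivAt.fderiv
    rw [this]; ext; simp
  have : PreconnectedSpace S := Subtype.preconnectedSpace hconn
  have hlc : IsLocallyConstant (S.restrict f) := by
    rw [IsLocallyConstant.iff_eventually_eq]
    rintro ⟨x, hx⟩
    obtain ⟨ε, hε, hball, hconst⟩ := hlocal x hx
    have hmem : Subtype.val ⁻¹' Metric.ball x ε ∈ nhds (⟨x, hx⟩ : S) :=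
      continuous_subtype_val.continuousAt.preimage_mem_nhds
        (Metric.ball_mem_nhds x hε)
    filter_upwards [hmem] with y hy
    exact hconst y hy
  refine ⟨f x₀, fun x hx => ?_⟩
  exact hlc.apply_eq_of_preconnectedSpace ⟨x, hx⟩ ⟨x₀, hx₀⟩
end

section
/- Let a, b ∈ ℝ, c ∈ ℝ, and define t(s) = c·φ₁(s) + φ₂(s) using the third-order hyperbolic functions. Let s : I → ℝ be differentiable with t(s(x)) ≠ 0 and suppose x = a·t'(s(x))/t(s(x)) + b·t''(s(x))/t(s(x)) for all x ∈ I, where bx + a² ≠ 0 and ds/dx ≠ 0 on I. Then y = ds/dx satisfies Vein's Abel equation dy/dx = (-2b/(bx+a²))y + (3(ax+b²)/(bx+a²))y² + ((x³-3abx-a³-b³)/(bx+a²))y³, and moreover b·(dx/ds) = (ax+b²) - (bx+a²)·t'(s)/t(s). -/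
open Real

noncomputable def phi1 (x : ℝ) : ℝ :=
  (1/3) * (Real.exp x + 2 * Real.exp (-x/2) * Real.cos (x * Real.sqrt 3 / 2))

noncomputable def phi2 (x : ℝ) : ℝ :=
  (1/3) * (Real.exp x - 2 * Real.exp (-x/2) * Real.cos (x * Real.sqrt 3 / 2 + Real.pi/3))

noncomputable def phi3 (x : ℝ) : ℝ :=
  (1/3) * (Real.exp x - 2 * Real.exp (-x/2) * Real.cos (x * Real.sqrt 3 / 2 - Real.pi/3))

noncomputable def tfun (c : ℝ) (s : ℝ) : ℝ := c * phi1 s + phi2 s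

lemma hd_exp_half (x : ℝ) : HasDerivAt (fun x : ℝ => Real.exp (-x/2)) (Real.exp (-x/2) * (-1/2)) x := by
  have h : HasDerivAt (fun x : ℝ => -x/2) (-1/2) x := by
    simpa using ((hasDerivAt_id x).neg.div_const 2)
  exact (Real.hasDerivAt_exp (-x/2)).comp x h

lemma hd_cos_arg0 (x : ℝ) :
    HasDerivAt (fun x : ℝ => Real.cos (x * Real.sqrt 3 / 2))
      (-Real.sin (x * Real.sqrt 3 / 2) * (Real.sqrt 3 / 2)) x := by
  have h : HasDerivAt (fun x : ℝ => x * Real.sqrt 3 / 2) (Real.sqrt 3 / 2) x := by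
    simpa using (((hasDerivAt_id x).mul_const (Real.sqrt 3)).div_const 2)
  exact (Real.hasDerivAt_cos (x * Real.sqrt 3 / 2)).comp x h

lemma hd_cos_add (d : ℝ) (x : ℝ) :
    HasDerivAt (fun x : ℝ => Real.cos (x * Real.sqrt 3 / 2 + d))
      (-Real.sin (x * Real.sqrt 3 / 2 + d) * (Real.sqrt 3 / 2)) x := by
  have h : HasDerivAt (fun x : ℝ => x * Real.sqrt 3 / 2 + d) (Real.sqrt 3 / 2) x := by
    simpa using ((((hasDerivAt_id x).mul_const (Real.sqrt 3)).div_const 2).add_const d)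
  exact (Real.hasDerivAt_cos (x * Real.sqrt 3 / 2 + d)).comp x h

lemma hd_cos_sub (d : ℝ) (x : ℝ) :
    HasDerivAt (fun x : ℝ => Real.cos (x * Real.sqrt 3 / 2 - d))
      (-Real.sin (x * Real.sqrt 3 / 2 - d) * (Real.sqrt 3 / 2)) x := by
  have h : HasDerivAt (fun x : ℝ => x * Real.sqrt 3 / 2 - d) (Real.sqrt 3 / 2) x := by
    simpa using ((((hasDerivAt_id x).mul_const (Real.sqrt 3)).div_const 2).sub_const d)
  exact (Real.hasDerivAt_cos (x * Real.sqrt 3 / 2 - d)).comp x h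

lemma sqrt3_sq : Real.sqrt 3 ^ 2 = 3 := Real.sq_sqrt (by norm_num)

lemma hasDerivAt_phi1 (x : ℝ) : HasDerivAt phi1 (phi3 x) x := by
  have h := ((Real.hasDerivAt_exp x).add
    (((hd_exp_half x).const_mul 2).mul (hd_cos_arg0 x))).const_mul ((1:ℝ)/3)
  unfold phi1 phi3
  refine h.congr_deriv (Eq.symm ?_)
  rw [Real.cos_sub, Real.cos_pi_div_three, Real.sin_pi_div_three]
  ring

lemma hasDerivAt_phi2 (x : ℝ) : HasDerivAt phi2 (phi1 x) x := by
  have h := ((Real.hasDerivAt_exp x).sub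
    (((hd_exp_half x).const_mul 2).mul (hd_cos_add (Real.pi/3) x))).const_mul ((1:ℝ)/3)
  unfold phi2 phi1
  refine h.congr_deriv (Eq.symm ?_)
  simp only [Real.cos_add, Real.cos_sub, Real.sin_add, Real.sin_sub,
    Real.cos_pi_div_three, Real.sin_pi_div_three]
  linear_combination (-(1/6) * Real.exp (-x/2) * Real.cos (x * Real.sqrt 3 / 2)) * sqrt3_sq

lemma hasDerivAt_phi3 (x : ℝ) : HasDerivAt phi3 (phi2 x) x := by
  have h := ((Real.hasDerivAt_exp x).sub
    (((hd_exp_half x).const_mul 2).mul (hd_cos_sub (Real.pi/3) x))).const_mul ((1:ℝ)/3)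
  unfold phi3 phi2
  refine h.congr_deriv (Eq.symm ?_)
  simp only [Real.cos_add, Real.cos_sub, Real.sin_add, Real.sin_sub,
    Real.cos_pi_div_three, Real.sin_pi_div_three]
  linear_combination ((1/6) * Real.exp (-x/2) * Real.cos (x * Real.sqrt 3 / 2)) * sqrt3_sq

lemma hasDerivAt_tfun (c z : ℝ) : HasDerivAt (tfun c) (c * phi3 z + phi1 z) z :=
  ((hasDerivAt_phi1 z).const_mul c).add (hasDerivAt_phi2 z)

lemma hasDerivAt_tfun' (c z : ℝ) :
    HasDerivAt (fun z => c * phi3 z + phi1 z) (c * phi2 z + phi3 z) z :=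
  ((hasDerivAt_phi3 z).const_mul c).add (hasDerivAt_phi1 z)

lemma hasDerivAt_tfun'' (c z : ℝ) :
    HasDerivAt (fun z => c * phi2 z + phi3 z) (tfun c z) z :=
  ((hasDerivAt_phi2 z).const_mul c).add (hasDerivAt_phi3 z)

lemma deriv_tfun_eq (c : ℝ) : deriv (tfun c) = fun z => c * phi3 z + phi1 z :=
  funext fun z => (hasDerivAt_tfun c z).deriv

lemma deriv2_tfun_eq (c : ℝ) :
    deriv (deriv (tfun c)) = fun z => c * phi2 z + phi3 z := by
  rw [deriv_tfun_eq]; exact funext fun z => (hasDerivAt_tfun' c z).deriv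

lemma deriv_tfun_at (c z : ℝ) : deriv (tfun c) z = c * phi3 z + phi1 z :=
  (hasDerivAt_tfun c z).deriv

lemma deriv2_tfun_at (c z : ℝ) :
    deriv (deriv (tfun c)) z = c * phi2 z + phi3 z := by
  rw [deriv_tfun_eq]; exact (hasDerivAt_tfun' c z).deriv

theorem vein_parametric_solution
    (a b c : ℝ) (S : Set ℝ) (hS : IsOpen S) (s : ℝ → ℝ)
    (hs : ∀ x ∈ S, DifferentiableAt ℝ s x)
    (hs2 : ∀ x ∈ S, DifferentiableAt ℝ (deriv s) x)
    (ht : ∀ x ∈ S, tfun c (s x) ≠ 0)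
    (himp : ∀ x ∈ S,
      x = a * deriv (tfun c) (s x) / tfun c (s x)
        + b * deriv (deriv (tfun c)) (s x) / tfun c (s x))
    (hden : ∀ x ∈ S, b * x + a ^ 2 ≠ 0)
    (hds : ∀ x ∈ S, deriv s x ≠ 0) :
    ∀ x ∈ S,
      (deriv (deriv s) x
        = (-2 * b / (b * x + a ^ 2)) * deriv s x
          + (3 * (a * x + b ^ 2) / (b * x + a ^ 2)) * (deriv s x) ^ 2
          + ((x ^ 3 - 3 * a * b * x - a ^ 3 - b ^ 3) / (b * x + a ^ 2)) * (deriv s x) ^ 3)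
      ∧ b * (1 / deriv s x)
          = (a * x + b ^ 2) - (b * x + a ^ 2) * (deriv (tfun c) (s x) / tfun c (s x)) := by
  intro x hx
  -- hasDerivAt facts at arbitrary z ∈ S
  have hPQRd : ∀ z ∈ S,
      HasDerivAt (fun w => tfun c (s w)) ((c * phi3 (s z) + phi1 (s z)) * deriv s z) z ∧
      HasDerivAt (fun w => c * phi3 (s w) + phi1 (s w))
        ((c * phi2 (s z) + phi3 (s z)) * deriv s z) z ∧
      HasDerivAt (fun w => c * phi2 (s w) + phi3 (s w)) (tfun c (s z) * deriv s z) z := by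
    intro z hz
    have hsz : HasDerivAt s (deriv s z) z := (hs z hz).hasDerivAt
    exact ⟨(hasDerivAt_tfun c (s z)).comp z hsz,
      (hasDerivAt_tfun' c (s z)).comp z hsz,
      (hasDerivAt_tfun'' c (s z)).comp z hsz⟩
  -- first key identity on S
  have hC1S : ∀ z ∈ S,
      deriv s z * (a * ((c * phi2 (s z) + phi3 (s z)) * tfun c (s z)
            - (c * phi3 (s z) + phi1 (s z)) ^ 2)
          + b * ((tfun c (s z)) ^ 2
            - (c * phi3 (s z) + phi1 (s z)) * (c * phi2 (s z) + phi3 (s z))))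
        = (tfun c (s z)) ^ 2 := by
    intro z hz
    obtain ⟨hP, hQ, hR⟩ := hPQRd z hz
    have hpz := ht z hz
    have hFd := ((hQ.const_mul a).div hP hpz).add ((hR.const_mul b).div hP hpz)
    have hFid : HasDerivAt (fun w => a * (c * phi3 (s w) + phi1 (s w)) / tfun c (s w)
        + b * (c * phi2 (s w) + phi3 (s w)) / tfun c (s w)) 1 z := by
      refine (hasDerivAt_id z).congr_of_eventuallyEq ?_
      filter_upwards [hS.mem_nhds hz] with w hw
      have h := himp w hw
      rw [deriv_tfun_at, deriv2_tfun_at] at h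
      exact h.symm
    have heq := hFd.unique hFid
    field_simp at heq
    linear_combination heq
  -- second derivative identity at x
  obtain ⟨hP, hQ, hR⟩ := hPQRd x hx
  have hy2d : HasDerivAt (deriv s) (deriv (deriv s) x) x := (hs2 x hx).hasDerivAt
  have hW := (((hR.mul hP).sub (hQ.pow 2)).const_mul a).add
    (((hP.pow 2).sub (hQ.mul hR)).const_mul b)
  have hH := hy2d.mul hW
  have hK := hP.pow 2
  have hHKev : (fun w => deriv s w * (a * ((c * phi2 (s w) + phi3 (s w)) * tfun c (s w)
            - (c * phi3 (s w) + phi1 (s w)) ^ 2)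
          + b * ((tfun c (s w)) ^ 2
            - (c * phi3 (s w) + phi1 (s w)) * (c * phi2 (s w) + phi3 (s w)))))
      =ᶠ[nhds x] (fun w => (tfun c (s w)) ^ 2) := by
    filter_upwards [hS.mem_nhds hx] with w hw
    exact hC1S w hw
  have hE3 := hH.unique (hK.congr_of_eventuallyEq hHKev)
  -- specialize and set up scalar algebra
  have hC1x := hC1S x hx
  have hE1 := himp x hx
  rw [deriv_tfun_at, deriv2_tfun_at] at hE1
  rw [deriv_tfun_at]
  have hy := hds x hx
  have hp := ht x hx
  have hD := hden x hx
  set p := tfun c (s x) with hpdef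
  set q := c * phi3 (s x) + phi1 (s x) with hqdef
  set r := c * phi2 (s x) + phi3 (s x) with hrdef
  set y := deriv s x with hydef
  set y2 := deriv (deriv s) x with hy2def
  -- hE1 : x = a * q / p + b * r / p
  have hE1' : x * p = a * q + b * r := by
    field_simp at hE1
    linear_combination hE1
  have L2 : y * (a * r + b * p - x * q) = p := by
    apply mul_left_cancel₀ hp
    linear_combination hC1x - y * q * hE1'
  have hq' : q = p * (a * x * y - b + b ^ 2 * y) / (y * (b * x + a ^ 2)) := by
    rw [eq_div_iff (mul_ne_zero hy hD)]
    linear_combination (-(a * y)) * hE1' - b * L2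
  have hr' : r = p * (x ^ 2 * y + a - a * b * y) / (y * (b * x + a ^ 2)) := by
    rw [eq_div_iff (mul_ne_zero hy hD)]
    linear_combination (-(x * y)) * hE1' + a * L2
  have hy2' : y2 = (2 * p * q * y ^ 2
      - y ^ 3 * (a * (p ^ 2 - q * r) + b * (p * q - r ^ 2))) / p ^ 2 := by
    rw [eq_div_iff (pow_ne_zero 2 hp)]
    simp only [Pi.add_apply, Pi.mul_apply, Pi.sub_apply, Pi.pow_apply, Nat.cast_ofNat,
      Nat.add_one_sub_one, pow_one] at hE3
    linear_combination y * hE3 - y2 * hC1x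
  constructor
  · rw [hy2', hq', hr']
    have hD' : x * b + a ^ 2 ≠ 0 := by rwa [mul_comm] at hD
    field_simp
    ring
  · rw [hq']
    field_simp
    ring
end
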